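/- Let X and Y be Banach spaces and F : X → Y strictly differentiable at x̄. Then sur F(x̄) = C(F′(x̄)), where sur F(x̄) is the modulus of surjection (rate of openness) of F near x̄ and C(F′(x̄)) = sup{r ≥ 0 : r·B_Y ⊆ F′(x̄)(B_X)} is the Banach constant of the derivative. -/

import Mathlib

open ENNReal

/-- The Banach constant of a bounded linear operator:
`C(A) = sup {r ≥ 0 : r·B_Y ⊆ A(B_X)}`. -/
noncomputable def BanachConstant {X Y : Type*} [NormedAddCommGroup X] [NormedSpace ℝ X]
    [NormedAddCommGroup Y] [NormedSpace ℝ Y] (A : X →L[ℝ] Y) : ℝ≥0∞ :=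
  sSup {r : ℝ≥0∞ | ∀ y : Y, (‖y‖₊ : ℝ≥0∞) ≤ r → ∃ x : X, ‖x‖ ≤ 1 ∧ A x = y}

/-- The modulus of surjection (rate of openness) of `F` near `xb`: the supremum of
`r ≥ 0` such that for some `ε > 0`, `B(F x, r t) ∩ B(F xb, ε) ⊆ F (B(x,t))` for all
`x` with `‖x − xb‖ < ε` and `0 ≤ t < ε`. -/
noncomputable def surMod {X Y : Type*} [NormedAddCommGroup X] [NormedSpace ℝ X]
    [NormedAddCommGroup Y] [NormedSpace ℝ Y] (F : X → Y) (xb : X) : ℝ≥0∞ :=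
  sSup {r : ℝ≥0∞ | ∃ ε : ℝ, 0 < ε ∧ ∀ x : X, ‖x - xb‖ < ε → ∀ t : ℝ, 0 ≤ t → t < ε →
    ∀ y : Y, (‖y - F x‖₊ : ℝ≥0∞) ≤ r * ENNReal.ofReal t → ‖y - F xb‖ < ε →
      ∃ x' : X, ‖x' - x‖ ≤ t ∧ F x' = y}


open Set Metric in
lemma exact_of_approx {X Y : Type*} [NormedAddCommGroup X] [NormedSpace ℝ X]
    [CompleteSpace X] [NormedAddCommGroup Y] [NormedSpace ℝ Y]
    (A : X →L[ℝ] Y) {s q : ℝ} (hs : 0 < s) (hq0 : 0 ≤ q) (hq : q < 1)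
    (h : ∀ y : Y, ∃ u : X, ‖u‖ ≤ ‖y‖ / s ∧ ‖y - A u‖ ≤ q * ‖y‖) :
    ∀ y : Y, ∃ x : X, ‖x‖ ≤ ‖y‖ / (s * (1 - q)) ∧ A x = y := by
  intro y
  choose g hg1 hg2 using h
  set v : ℕ → Y := fun n => (fun z => z - A (g z))^[n] y with hv
  have hvs : ∀ n, v (n + 1) = v n - A (g (v n)) := by
    intro n
    simp [hv, Function.iterate_succ_apply']
  have hvn : ∀ n, ‖v n‖ ≤ q ^ n * ‖y‖ := by
    intro n
    induction n with
    | zero => simp [hv]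
    | succ n ih =>
      rw [hvs n, pow_succ, mul_comm (q ^ n) q, mul_assoc]
      exact (hg2 (v n)).trans (by nlinarith [norm_nonneg (v n)])
  have hub : ∀ n, ‖g (v n)‖ ≤ q ^ n * (‖y‖ / s) := by
    intro n
    refine (hg1 (v n)).trans ?_
    rw [div_le_iff₀ hs]
    have he : q ^ n * (‖y‖ / s) * s = q ^ n * ‖y‖ := by field_simp
    rw [he]; exact hvn n
  have hsumgeo : Summable (fun n : ℕ => q ^ n * (‖y‖ / s)) :=
    (summable_geometric_of_lt_one hq0 hq).mul_right _
  have hsum : Summable (fun n => g (v n)) :=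
    Summable.of_norm_bounded hsumgeo hub
  refine ⟨∑' n, g (v n), ?_, ?_⟩
  · have h1 : ‖∑' n, g (v n)‖ ≤ ∑' n, ‖g (v n)‖ :=
      norm_tsum_le_tsum_norm (hsumgeo.of_nonneg_of_le (fun n => norm_nonneg _) hub)
    have h2 : ∑' n, ‖g (v n)‖ ≤ ∑' n, q ^ n * (‖y‖ / s) :=
      Summable.tsum_le_tsum hub (hsumgeo.of_nonneg_of_le (fun n => norm_nonneg _) hub) hsumgeo
    have h3 : ∑' n : ℕ, q ^ n * (‖y‖ / s) = (1 - q)⁻¹ * (‖y‖ / s) := by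
      rw [tsum_mul_right, tsum_geometric_of_lt_one hq0 hq]
    refine (h1.trans h2).trans_eq ?_
    rw [h3]
    field_simp
  · -- A (tsum) = y via telescoping
    have hA : HasSum (fun n => A (g (v n))) (A (∑' n, g (v n))) :=
      A.hasSum hsum.hasSum
    have heq : (fun n => A (g (v n))) = fun n => v n - v (n + 1) := by
      funext n; rw [hvs n]; abel
    rw [heq] at hA
    have htend := hA.tendsto_sum_nat
    have hpart : ∀ n : ℕ, ∑ i ∈ Finset.range n, (v i - v (i + 1)) = v 0 - v n := by
      intro n; exact Finset.sum_range_sub' v n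
    simp only [hpart] at htend
    have hv0 : v 0 = y := rfl
    have hvlim : Filter.Tendsto v Filter.atTop (nhds 0) := by
      refine squeeze_zero_norm hvn ?_
      have := (tendsto_pow_atTop_nhds_zero_of_lt_one hq0 hq).mul_const ‖y‖
      simpa using this
    have : Filter.Tendsto (fun n => v 0 - v n) Filter.atTop (nhds (v 0 - 0)) :=
      (tendsto_const_nhds).sub hvlim
    rw [hv0, sub_zero] at this
    exact tendsto_nhds_unique htend this

open Set Metric in
lemma sur_le_banach {X Y : Type*} [NormedAddCommGroup X] [NormedSpace ℝ X]
    [CompleteSpace X] [NormedAddCommGroup Y] [NormedSpace ℝ Y] [CompleteSpace Y]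
    (F : X → Y) (xb : X) (A : X →L[ℝ] Y) (hF : HasStrictFDerivAt F A xb) :
    surMod F xb ≤ BanachConstant A := by
  refine sSup_le fun r hr => ?_
  obtain ⟨ε, hε, H⟩ := hr
  refine ENNReal.le_of_forall_nnreal_lt fun s hs => ?_
  rcases eq_or_lt_of_le (zero_le : 0 ≤ s) with h0 | h0
  · rw [← h0]; simp
  obtain ⟨s', hss', hs'r⟩ := ENNReal.lt_iff_exists_nnreal_btwn.1 hs
  rw [ENNReal.coe_lt_coe] at hss'
  have hs'0 : (0 : ℝ) < s' := lt_of_le_of_lt s.coe_nonneg (NNReal.coe_lt_coe.2 hss')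
  -- Step A: approximate solvability on the ball of radius s'
  have stepA : ∀ δ : ℝ, 0 < δ → ∀ y : Y, ‖y‖ ≤ (s' : ℝ) →
      ∃ u : X, ‖u‖ ≤ 1 ∧ ‖y - A u‖ ≤ δ := by
    intro δ hδ y hy
    obtain ⟨s₀, hs₀, happ⟩ := hF.approximates_deriv_on_nhds (Or.inr (Real.toNNReal_pos.2 hδ))
    obtain ⟨ρ, hρ, hball⟩ := Metric.mem_nhds_iff.1 hs₀
    have hy1 : (0 : ℝ) < ‖y‖ + 1 := by positivity
    set t := min (ε/2) (min (ρ/2) (ε/(2*(‖y‖+1)))) with ht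
    have ht0 : 0 < t := lt_min (by linarith) (lt_min (by linarith) (by positivity))
    have htε : t < ε := (min_le_left _ _).trans_lt (by linarith)
    have htρ : t ≤ ρ/2 := le_trans (min_le_right _ _) (min_le_left _ _)
    have hty : t * ‖y‖ < ε := by
      have h1 : t ≤ ε/(2*(‖y‖+1)) := le_trans (min_le_right _ _) (min_le_right _ _)
      have h2 : (ε/(2*(‖y‖+1))) * ‖y‖ < ε := by
        rw [div_mul_eq_mul_div, div_lt_iff₀ (by positivity)]
        nlinarith [norm_nonneg y]
      calc t * ‖y‖ ≤ (ε/(2*(‖y‖+1))) * ‖y‖ := by nlinarith [norm_nonneg y]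
        _ < ε := h2
    have hsub : F xb + t • y - F xb = t • y := by abel
    have hcond : (‖(F xb + t • y) - F xb‖₊ : ℝ≥0∞) ≤ r * ENNReal.ofReal t := by
      rw [hsub]
      have h1 : (‖t • y‖₊ : ℝ≥0∞) = ENNReal.ofReal t * (‖y‖₊ : ℝ≥0∞) := by
        rw [nnnorm_smul, ENNReal.coe_mul, ← enorm_eq_nnnorm, Real.enorm_eq_ofReal ht0.le]
      rw [h1, mul_comm r]
      refine mul_le_mul_right ?_ _
      refine le_trans ?_ hs'r.le
      rw [ENNReal.coe_le_coe, ← NNReal.coe_le_coe, coe_nnnorm]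
      exact hy
    have hnear : ‖F xb + t • y - F xb‖ < ε := by
      rw [hsub, norm_smul, Real.norm_eq_abs, abs_of_pos ht0]
      exact hty
    obtain ⟨x', hx't, hFx'⟩ := H xb (by simpa using hε) t ht0.le htε (F xb + t • y) hcond hnear
    have hx'ball : x' ∈ Metric.ball xb ρ := by
      rw [Metric.mem_ball, dist_eq_norm]
      linarith
    have happx : ‖F x' - F xb - A (x' - xb)‖ ≤ δ * ‖x' - xb‖ := by
      have := happ x' (hball hx'ball) xb (hball (Metric.mem_ball_self hρ))
      rwa [Real.coe_toNNReal δ hδ.le] at this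
    have hFx'2 : F x' - F xb = t • y := by rw [hFx']; abel
    rw [hFx'2] at happx
    refine ⟨t⁻¹ • (x' - xb), ?_, ?_⟩
    · rw [norm_smul, Real.norm_eq_abs, abs_of_pos (inv_pos.2 ht0)]
      rw [inv_mul_le_iff₀ ht0, mul_one]
      exact hx't
    · have hu : y - A (t⁻¹ • (x' - xb)) = t⁻¹ • (t • y - A (x' - xb)) := by
        rw [A.map_smul, smul_sub, smul_smul, inv_mul_cancel₀ ht0.ne', one_smul]
      rw [hu, norm_smul, Real.norm_eq_abs, abs_of_pos (inv_pos.2 ht0)]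
      rw [inv_mul_le_iff₀ ht0]
      calc ‖t • y - A (x' - xb)‖ ≤ δ * ‖x' - xb‖ := happx
        _ ≤ δ * t := by nlinarith [norm_nonneg (x' - xb)]
        _ = t * δ := by ring
  -- Step B: exact solvability at radius s
  have hspos : (0 : ℝ) < s := h0
  have hdiv1 : (s : ℝ) / s' < 1 := (div_lt_one hs'0).2 (NNReal.coe_lt_coe.2 hss')
  have hdiv0 : 0 < (s : ℝ) / s' := div_pos hspos hs'0
  obtain ⟨q, hqdef⟩ : ∃ q : ℝ, q = 1 - (s : ℝ) / (s' : ℝ) := ⟨_, rfl⟩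
  have hq0 : 0 < q := by rw [hqdef]; linarith
  have hq1 : q < 1 := by rw [hqdef]; linarith
  have happrox : ∀ y : Y, ∃ u : X, ‖u‖ ≤ ‖y‖ / s' ∧ ‖y - A u‖ ≤ q * ‖y‖ := by
    intro y
    by_cases hy0 : y = 0
    · exact ⟨0, by simp [hy0]⟩
    have hyn : (0 : ℝ) < ‖y‖ := norm_pos_iff.2 hy0
    obtain ⟨u', hu'1, hu'2⟩ := stepA (q * s') (by positivity) (((s' : ℝ)/‖y‖) • y)
      (by rw [norm_smul, Real.norm_eq_abs, abs_of_pos (by positivity)]; field_simp; exact le_rfl)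
    refine ⟨(‖y‖/(s' : ℝ)) • u', ?_, ?_⟩
    · rw [norm_smul, Real.norm_eq_abs, abs_of_pos (by positivity)]
      nlinarith [norm_nonneg u', div_pos hyn hs'0]
    · have hy2 : y - A ((‖y‖/(s' : ℝ)) • u') =
          (‖y‖/(s' : ℝ)) • (((s' : ℝ)/‖y‖) • y - A u') := by
        rw [smul_sub, A.map_smul, smul_smul]
        congr 1
        rw [div_mul_div_comm, mul_comm]
        rw [div_self (by positivity), one_smul]
      rw [hy2, norm_smul, Real.norm_eq_abs, abs_of_pos (by positivity)]
      calc ‖y‖/(s':ℝ) * ‖((s' : ℝ)/‖y‖) • y - A u'‖ ≤ ‖y‖/(s':ℝ) * (q * s') := by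
            nlinarith [div_pos hyn hs'0]
        _ = q * ‖y‖ := by field_simp
  have hexact := exact_of_approx A hs'0 hq0.le hq1 happrox
  refine le_sSup ?_
  intro y hy
  obtain ⟨x, hx1, hx2⟩ := hexact y
  refine ⟨x, ?_, hx2⟩
  have hkey : (s' : ℝ) * (1 - q) = (s : ℝ) := by
    rw [hqdef]; field_simp; ring
  rw [hkey] at hx1
  have hys : ‖y‖ ≤ (s : ℝ) := by
    rw [ENNReal.coe_le_coe, ← NNReal.coe_le_coe, coe_nnnorm] at hy
    exact hy
  calc ‖x‖ ≤ ‖y‖ / s := hx1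
    _ ≤ (s : ℝ) / s := by gcongr
    _ = 1 := div_self hspos.ne'

open Set Metric in
lemma banach_le_sur {X Y : Type*} [NormedAddCommGroup X] [NormedSpace ℝ X]
    [CompleteSpace X] [NormedAddCommGroup Y] [NormedSpace ℝ Y] [CompleteSpace Y]
    (F : X → Y) (xb : X) (A : X →L[ℝ] Y) (hF : HasStrictFDerivAt F A xb) :
    BanachConstant A ≤ surMod F xb := by
  refine ENNReal.le_of_forall_nnreal_lt fun s hs => ?_
  rcases eq_or_lt_of_le (zero_le : 0 ≤ s) with h0 | h0
  · rw [← h0]; simp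
  rw [BanachConstant, lt_sSup_iff] at hs
  obtain ⟨r, hrmem, hsr⟩ := hs
  obtain ⟨ρ, hsρ, hρr⟩ := ENNReal.lt_iff_exists_nnreal_btwn.1 hsr
  rw [ENNReal.coe_lt_coe] at hsρ
  have hρ0 : 0 < ρ := lt_of_le_of_lt (zero_le : 0 ≤ s) hsρ
  have hρℝ : (0 : ℝ) < ρ := hρ0
  have hsℝ : (0 : ℝ) < s := h0
  have hsρℝ : (s : ℝ) < ρ := NNReal.coe_lt_coe.2 hsρ
  have hρmem : ∀ y : Y, (‖y‖₊ : ℝ≥0∞) ≤ ρ → ∃ x, ‖x‖ ≤ 1 ∧ A x = y :=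
    fun y hy => hrmem y (hy.trans hρr.le)
  -- construct a nonlinear right inverse of norm ρ⁻¹
  have hinv : ∀ y : Y, ∃ x : X, ‖x‖ ≤ (ρ : ℝ)⁻¹ * ‖y‖ ∧ A x = y := by
    intro y
    by_cases hy0 : y = 0
    · exact ⟨0, by simp [hy0]⟩
    have hyn : (0 : ℝ) < ‖y‖ := norm_pos_iff.2 hy0
    obtain ⟨x', hx'1, hx'2⟩ := hρmem (((ρ : ℝ)/‖y‖) • y) (by
      rw [ENNReal.coe_le_coe, ← NNReal.coe_le_coe, coe_nnnorm, norm_smul,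
        Real.norm_eq_abs, abs_of_pos (by positivity)]
      rw [div_mul_cancel₀ _ hyn.ne'])
    refine ⟨(‖y‖/(ρ : ℝ)) • x', ?_, ?_⟩
    · rw [norm_smul, Real.norm_eq_abs, abs_of_pos (by positivity), inv_mul_eq_div]
      nlinarith [norm_nonneg x', div_pos hyn hρℝ]
    · rw [A.map_smul, hx'2, smul_smul, div_mul_div_comm, mul_comm,
        div_self (by positivity), one_smul]
  choose g hg1 hg2 using hinv
  set f'symm : A.NonlinearRightInverse :=
    ⟨g, ρ⁻¹, fun y => by rw [NNReal.coe_inv]; exact hg1 y, hg2⟩ with hf'symm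
  -- the approximation constant
  obtain ⟨c, hc⟩ : ∃ c : NNReal, c = (ρ - s)/2 := ⟨_, rfl⟩
  have hc0 : 0 < c := by
    rw [hc]
    have : 0 < ρ - s := tsub_pos_of_lt hsρ
    positivity
  have hcℝ : (c : ℝ) = ((ρ : ℝ) - s)/2 := by
    rw [hc, NNReal.coe_div, NNReal.coe_sub hsρ.le]; norm_num
  obtain ⟨s₀, hs₀, happ⟩ := hF.approximates_deriv_on_nhds (Or.inr hc0) (c := c)
  obtain ⟨η, hη, hball⟩ := Metric.mem_nhds_iff.1 hs₀
  refine le_sSup ⟨η/3, by positivity, ?_⟩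
  intro x hx t ht0 htε y hy _
  have hsubset : Metric.closedBall x t ⊆ s₀ := by
    intro z hz
    refine hball ?_
    rw [Metric.mem_ball]
    have h1 : dist z x ≤ t := Metric.mem_closedBall.1 hz
    have h2 : dist x xb < η/3 := by rw [dist_eq_norm]; exact hx
    calc dist z xb ≤ dist z x + dist x xb := dist_triangle _ _ _
      _ < η/3 + η/3 := by linarith
      _ < η := by linarith
  have hsurj := happ.surjOn_closedBall_of_nonlinearRightInverse f'symm ht0 hsubset
  have hnn : f'symm.nnnorm = ρ⁻¹ := rfl
  have hyFx : ‖y - F x‖ ≤ (s : ℝ) * t := by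
    rw [ENNReal.ofReal, ← ENNReal.coe_mul, ENNReal.coe_le_coe, ← NNReal.coe_le_coe,
      coe_nnnorm, NNReal.coe_mul, Real.coe_toNNReal t ht0] at hy
    exact hy
  have hρc : (s : ℝ) ≤ ((f'symm.nnnorm : ℝ))⁻¹ - c := by
    rw [hnn, NNReal.coe_inv, inv_inv, hcℝ]
    linarith
  have hyball : y ∈ Metric.closedBall (F x) ((((f'symm.nnnorm : ℝ))⁻¹ - c) * t) := by
    rw [Metric.mem_closedBall, dist_eq_norm]
    calc ‖y - F x‖ ≤ (s : ℝ) * t := hyFx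
      _ ≤ (((f'symm.nnnorm : ℝ))⁻¹ - c) * t := by nlinarith
  obtain ⟨x', hx'mem, hFx'⟩ := hsurj hyball
  refine ⟨x', ?_, hFx'⟩
  rw [← dist_eq_norm]
  exact Metric.mem_closedBall.1 hx'mem

/-- Lyusternik–Graves theorem: for a mapping between Banach spaces strictly
differentiable at `xb`, `sur F(xb) = C(F'(xb))`. -/
theorem lyusternik_graves {X Y : Type*} [NormedAddCommGroup X] [NormedSpace ℝ X]
    [CompleteSpace X] [NormedAddCommGroup Y] [NormedSpace ℝ Y] [CompleteSpace Y]
    (F : X → Y) (xb : X) (A : X →L[ℝ] Y) (hF : HasStrictFDerivAt F A xb) :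
    surMod F xb = BanachConstant A :=
  le_antisymm (sur_le_banach F xb A hF) (banach_le_sur F xb A hF)
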